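/- The infinite product ∏_{k=3}^∞ cos(π/k) over all integers k ≥ 3 converges to a positive real number (the Kepler–Bouwkamp constant). -/

import Mathlib

open Real Filter

lemma kb_cos_pos (k : ℕ) : 0 < Real.cos (π / (k + 3)) := by
  apply Real.cos_pos_of_mem_Ioo
  constructor
  · have : (0:ℝ) < π / (k + 3) := by positivity
    linarith [Real.pi_pos]
  · rw [div_lt_div_iff₀ (by positivity) (by norm_num)]
    nlinarith [Real.pi_pos, Nat.cast_nonneg (α := ℝ) k]

lemma kb_half_le_cos (k : ℕ) : (2:ℝ)⁻¹ ≤ Real.cos (π / (k + 3)) := by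
  have h3 : (3:ℝ) ≤ (k:ℝ) + 3 := by
    have := Nat.cast_nonneg (α := ℝ) k; linarith
  have hle : π / (k + 3) ≤ π / 3 :=
    div_le_div_of_nonneg_left Real.pi_pos.le (by norm_num) h3
  calc (2:ℝ)⁻¹ = Real.cos (π / 3) := by rw [Real.cos_pi_div_three]; norm_num
    _ ≤ Real.cos (π / (k + 3)) := by
        apply Real.cos_le_cos_of_nonneg_of_le_pi (by positivity) _ hle
        nlinarith [Real.pi_pos]

lemma kb_summable : Summable (fun k : ℕ => Real.log (Real.cos (π / (k + 3)))) := by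
  have hs : Summable (fun k : ℕ => (π / (k + 3)) ^ 2) := by
    have h0 : Summable (fun n : ℕ => 1 / (n:ℝ) ^ 2) :=
      Real.summable_one_div_nat_pow.mpr one_lt_two
    have h1 : Summable (fun n : ℕ => π ^ 2 * (1 / ((n + 3 : ℕ):ℝ) ^ 2)) :=
      ((summable_nat_add_iff 3).mpr h0).mul_left _
    apply h1.congr
    intro n
    push_cast
    field_simp
  apply Summable.of_abs
  apply hs.of_nonneg_of_le (fun k => abs_nonneg _)
  intro k
  set x := π / (k + 3) with hx
  have hc := kb_cos_pos k
  have hh := kb_half_le_cos k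
  have hlog : Real.log (Real.cos x) ≤ 0 :=
    Real.log_nonpos hc.le (Real.cos_le_one _)
  rw [abs_of_nonpos hlog]
  have h1 : -Real.log (Real.cos x) = Real.log (Real.cos x)⁻¹ := (Real.log_inv _).symm
  rw [h1]
  have h2 : Real.log (Real.cos x)⁻¹ ≤ (Real.cos x)⁻¹ - 1 :=
    Real.log_le_sub_one_of_pos (by positivity)
  have h3 : (Real.cos x)⁻¹ - 1 = (1 - Real.cos x) / Real.cos x := by
    rw [inv_eq_one_div, div_sub_one (b := Real.cos x) hc.ne']
  have h4 : 1 - Real.cos x ≤ x ^ 2 / 2 := by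
    linarith [Real.one_sub_sq_div_two_le_cos (x := x)]
  have h5 : (1 - Real.cos x) / Real.cos x ≤ (x ^ 2 / 2) / 2⁻¹ := by
    apply div_le_div₀ (by positivity) h4 (by norm_num) hh
  calc Real.log (Real.cos x)⁻¹ ≤ (1 - Real.cos x) / Real.cos x := by rw [← h3]; exact h2
    _ ≤ (x ^ 2 / 2) / 2⁻¹ := h5
    _ = x ^ 2 := by ring

theorem keplerBouwkamp_converges :
    ∃ L : ℝ, 0 < L ∧
      Tendsto (fun n : ℕ => ∏ k ∈ Finset.Icc 3 n, Real.cos (π / k)) atTop (nhds L) := by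
  set S : ℝ := ∑' k : ℕ, Real.log (Real.cos (π / (k + 3))) with hS
  refine ⟨Real.exp S, Real.exp_pos _, ?_⟩
  have hsum := kb_summable.hasSum.tendsto_sum_nat
  have hexp : Tendsto (fun m : ℕ => Real.exp (∑ k ∈ Finset.range m,
      Real.log (Real.cos (π / (k + 3))))) atTop (nhds (Real.exp S)) :=
    (Real.continuous_exp.tendsto _).comp hsum
  have hprod : Tendsto (fun m : ℕ => ∏ k ∈ Finset.range m,
      Real.cos (π / (k + 3))) atTop (nhds (Real.exp S)) := by
    apply hexp.congr
    intro m
    rw [Real.exp_sum]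
    exact Finset.prod_congr rfl fun k _ => Real.exp_log (kb_cos_pos k)
  have hcomp := hprod.comp (tendsto_sub_atTop_nat 2)
  apply hcomp.congr
  intro n
  simp only [Function.comp]
  rw [← Finset.Ico_add_one_right_eq_Icc, Finset.prod_Ico_eq_prod_range]
  have : n + 1 - 3 = n - 2 := by omega
  rw [this]
  apply Finset.prod_congr rfl
  intro k _
  norm_num
  ring_nf
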